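/- Along any solution (X, P) of the extremal system whose control u is constant and equal to +1 or to −1 on an interval (a bang arc), the switching function Φ is four times differentiable there and its fourth derivative satisfies Φ⁽⁴⁾(t) = −(Δ² + 1) Φ̈(t) + Δ (Δ² + 2) x1(t) x3(t) + Δ² u (3 x2(t)² − 2 x1(t)² − x3(t)²). -/

import Mathlib

open Set

/-- On a bang arc (control constantly c = +1 or c = −1), the switching
function Φ = p3 x2 − p2 x3 is four times differentiable, with
Φ̇ = Δ (x1 p3 − x3 p1),
Φ̈ = −Δ² Φ + Δ c (x1 p2 − x2 p1) − Δ x1 x3,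
Φ⁽³⁾ = −(Δ² + 1) Φ̇ − 2 Δ c x1 x2 + Δ² x2 x3, and
Φ⁽⁴⁾(t) = −(Δ² + 1) Φ̈(t) + Δ (Δ² + 2) x1(t) x3(t) + Δ² c (3 x2(t)² − 2 x1(t)² − x3(t)²). -/
theorem switching_function_fourth_deriv_bang
    (Δ : ℝ) (hΔ : Δ ≠ 0) (a b : ℝ) (hab : a < b)
    (c : ℝ) (hc : c = 1 ∨ c = -1)
    (x1 x2 x3 p1 p2 p3 : ℝ → ℝ)
    (hx1 : ∀ t ∈ Ioo a b, HasDerivAt x1 (-Δ * x2 t) t)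
    (hx2 : ∀ t ∈ Ioo a b, HasDerivAt x2 (Δ * x1 t - c * x3 t) t)
    (hx3 : ∀ t ∈ Ioo a b, HasDerivAt x3 (c * x2 t) t)
    (hp1 : ∀ t ∈ Ioo a b, HasDerivAt p1 (-Δ * p2 t + x1 t) t)
    (hp2 : ∀ t ∈ Ioo a b, HasDerivAt p2 (Δ * p1 t - c * p3 t) t)
    (hp3 : ∀ t ∈ Ioo a b, HasDerivAt p3 (c * p2 t) t) :
    (∀ t ∈ Ioo a b,
      HasDerivAt (fun s => p3 s * x2 s - p2 s * x3 s)
        (Δ * (x1 t * p3 t - x3 t * p1 t)) t) ∧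
    (∀ t ∈ Ioo a b,
      HasDerivAt (fun s => Δ * (x1 s * p3 s - x3 s * p1 s))
        (-Δ ^ 2 * (p3 t * x2 t - p2 t * x3 t)
          + Δ * c * (x1 t * p2 t - x2 t * p1 t) - Δ * x1 t * x3 t) t) ∧
    (∀ t ∈ Ioo a b,
      HasDerivAt (fun s => -Δ ^ 2 * (p3 s * x2 s - p2 s * x3 s)
          + Δ * c * (x1 s * p2 s - x2 s * p1 s) - Δ * x1 s * x3 s)
        (-(Δ ^ 2 + 1) * (Δ * (x1 t * p3 t - x3 t * p1 t))
          - 2 * Δ * c * x1 t * x2 t + Δ ^ 2 * x2 t * x3 t) t) ∧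
    (∀ t ∈ Ioo a b,
      HasDerivAt (fun s => -(Δ ^ 2 + 1) * (Δ * (x1 s * p3 s - x3 s * p1 s))
          - 2 * Δ * c * x1 s * x2 s + Δ ^ 2 * x2 s * x3 s)
        (-(Δ ^ 2 + 1) * (-Δ ^ 2 * (p3 t * x2 t - p2 t * x3 t)
            + Δ * c * (x1 t * p2 t - x2 t * p1 t) - Δ * x1 t * x3 t)
          + Δ * (Δ ^ 2 + 2) * x1 t * x3 t
          + Δ ^ 2 * c * (3 * x2 t ^ 2 - 2 * x1 t ^ 2 - x3 t ^ 2)) t) := by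
  have hcc : c * c = 1 := by rcases hc with rfl | rfl <;> ring
  refine ⟨?_, ?_, ?_, ?_⟩
  · intro t ht
    have h := ((hp3 t ht).mul (hx2 t ht)).sub ((hp2 t ht).mul (hx3 t ht))
    exact h.congr_deriv (by ring)
  · intro t ht
    have h := ((((hx1 t ht).mul (hp3 t ht)).sub ((hx3 t ht).mul (hp1 t ht))).const_mul Δ)
    exact h.congr_deriv (by ring)
  · intro t ht
    have h1 := (((hp3 t ht).mul (hx2 t ht)).sub ((hp2 t ht).mul (hx3 t ht))).const_mul (-Δ ^ 2)
    have h2 := (((hx1 t ht).mul (hp2 t ht)).sub ((hx2 t ht).mul (hp1 t ht))).const_mul (Δ * c)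
    have h3 := ((hx1 t ht).mul (hx3 t ht)).const_mul Δ
    have h := (h1.add h2).sub h3
    refine (h.congr_deriv ?_).congr_of_eventuallyEq (Filter.Eventually.of_forall fun s => ?_)
    · rcases hc with rfl | rfl <;> ring
    · simp only [Pi.add_apply, Pi.sub_apply, Pi.mul_apply]; ring
  · intro t ht
    have h1 := ((((hx1 t ht).mul (hp3 t ht)).sub ((hx3 t ht).mul (hp1 t ht))).const_mul Δ).const_mul (-(Δ ^ 2 + 1))
    have h2 := ((hx1 t ht).mul (hx2 t ht)).const_mul (2 * Δ * c)
    have h3 := ((hx2 t ht).mul (hx3 t ht)).const_mul (Δ ^ 2)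
    have h := (h1.sub h2).add h3
    refine (h.congr_deriv ?_).congr_of_eventuallyEq (Filter.Eventually.of_forall fun s => ?_)
    · rcases hc with rfl | rfl <;> ring
    · simp only [Pi.add_apply, Pi.sub_apply, Pi.mul_apply]; ring
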